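/- Let G be the group with presentation ⟨a, b | w^q a = b w^q⟩ where w = b a⁻¹ b⁻¹ a and q is a positive integer. Then the quotient of G by the normal closure of the element w^q · a is the trivial group. -/

import Mathlib

/-- The relator set of the twist knot group `⟨a, b | wᵠ a = b wᵠ⟩`,
where `a = of true`, `b = of false`, `w = b a⁻¹ b⁻¹ a`. -/
def twistRels (q : ℤ) : Set (FreeGroup Bool) :=
  { (FreeGroup.of false * (FreeGroup.of true)⁻¹ * (FreeGroup.of false)⁻¹ *
      FreeGroup.of true) ^ q * FreeGroup.of true *
    (FreeGroup.of false *
      (FreeGroup.of false * (FreeGroup.of true)⁻¹ * (FreeGroup.of false)⁻¹ *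
        FreeGroup.of true) ^ q)⁻¹ }

theorem stmt_0 (q : ℤ) (hq : 0 < q) :
    ∀ x : PresentedGroup (twistRels q) ⧸
      Subgroup.normalClosure
        {((PresentedGroup.of false * (PresentedGroup.of true)⁻¹ *
            (PresentedGroup.of false)⁻¹ * PresentedGroup.of true :
              PresentedGroup (twistRels q)) ^ q * PresentedGroup.of true)},
    x = 1 := by
  intro x
  obtain ⟨g, rfl⟩ := QuotientGroup.mk_surjective x
  obtain ⟨f, rfl⟩ := QuotientGroup.mk_surjective g
  set G := PresentedGroup (twistRels q) with hG
  set a : G := PresentedGroup.of true with ha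
  set b : G := PresentedGroup.of false with hb
  set w : G := b * a⁻¹ * b⁻¹ * a with hw
  set N := Subgroup.normalClosure ({w ^ q * a} : Set G) with hN
  -- relation in G : w^q * a = b * w^q
  have hrel : w ^ q * a = b * w ^ q := by
    have h1 : (QuotientGroup.mk ((FreeGroup.of false * (FreeGroup.of true)⁻¹ *
        (FreeGroup.of false)⁻¹ * FreeGroup.of true) ^ q * FreeGroup.of true *
        (FreeGroup.of false * (FreeGroup.of false * (FreeGroup.of true)⁻¹ *
        (FreeGroup.of false)⁻¹ * FreeGroup.of true) ^ q)⁻¹) : G) = 1 := by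
      rw [QuotientGroup.eq_one_iff]
      exact Subgroup.subset_normalClosure rfl
    have h2 : w ^ q * a * (b * w ^ q)⁻¹ = 1 := by
      exact h1
    exact mul_inv_eq_one.mp h2
  -- pass to the quotient
  set φ : G →* G ⧸ N := QuotientGroup.mk' N with hφ
  set A : G ⧸ N := φ a with hA
  set B : G ⧸ N := φ b with hB
  have hWA : φ w ^ q * A = 1 := by
    have : φ (w ^ q * a) = 1 := by
      rw [hφ, QuotientGroup.mk'_apply, QuotientGroup.eq_one_iff]
      exact Subgroup.subset_normalClosure rfl
    simpa [map_mul, map_zpow] using this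
  have hBW : B * φ w ^ q = 1 := by
    have := congrArg φ hrel
    simp only [map_mul, map_zpow] at this
    rw [← this]; exact hWA
  have hAB : A = B := by
    have h1 : A = (φ w ^ q)⁻¹ := eq_inv_of_mul_eq_one_right hWA
    have h2 : B = (φ w ^ q)⁻¹ := eq_inv_of_mul_eq_one_left hBW
    rw [h1, h2]
  have hW1 : φ w = 1 := by
    have : φ w = B * A⁻¹ * B⁻¹ * A := by simp [hw, map_mul, map_inv, hA, hB]
    rw [this, hAB]; group
  have hA1 : A = 1 := by
    have := hWA; rw [hW1] at this; simpa using this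
  have hB1 : B = 1 := by rw [← hAB]; exact hA1
  -- every element of the quotient is 1
  have key : φ.comp (QuotientGroup.mk' (Subgroup.normalClosure (twistRels q))) = 1 := by
    apply FreeGroup.ext_hom
    intro y
    cases y
    · exact hB1
    · exact hA1
  have h := DFunLike.congr_fun key f
  simp only [MonoidHom.comp_apply, MonoidHom.one_apply, QuotientGroup.mk'_apply] at h
  exact h
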